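/- Let X ⊆ R^n be compact and nonempty. Then X is standard comonotone if and only if its convex hull conv(X) is standard comonotone. -/

import Mathlib

/-- The cone of vectors sorted in nonincreasing order along the permutation `π`. -/
def sortedCone (n : ℕ) (π : Equiv.Perm (Fin n)) : Set (Fin n → ℝ) :=
  {x | ∀ i j : Fin n, i ≤ j → x (π j) ≤ x (π i)}

/-- `X` is standard comonotone. -/
def StandardComonotone (n : ℕ) (X : Set (Fin n → ℝ)) : Prop :=
  ∀ (π : Equiv.Perm (Fin n)) (v : Fin n → ℝ), v ∈ sortedCone n π →
    (∃ x ∈ X, ∀ y ∈ X, ∑ i, v i * y i ≤ ∑ i, v i * x i) →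
    ∃ x ∈ X, (∀ y ∈ X, ∑ i, v i * y i ≤ ∑ i, v i * x i) ∧ x ∈ sortedCone n π

namespace Stmt7Aux

open Finset

variable {n : ℕ}

/-- The linear functional `x ↦ ∑ i, v i * x i`. -/
noncomputable def lf (v x : Fin n → ℝ) : ℝ := ∑ i, v i * x i

lemma lf_def (v x : Fin n → ℝ) : lf v x = ∑ i, v i * x i := rfl

lemma lf_cont (v : Fin n → ℝ) : Continuous (lf v) :=
  continuous_finset_sum _ fun i _ => continuous_const.mul (continuous_apply i)

lemma lf_isLinear (v : Fin n → ℝ) : IsLinearMap ℝ (lf v) := by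
  constructor
  · intro x y
    simp only [lf, Pi.add_apply, mul_add, Finset.sum_add_distrib]
  · intro c x
    simp only [lf, Pi.smul_apply, smul_eq_mul, Finset.mul_sum]
    exact Finset.sum_congr rfl fun i _ => mul_left_comm _ _ _

lemma lf_add_smul (u u' : Fin n → ℝ) (t : ℝ) (x : Fin n → ℝ) :
    lf (u + t • u') x = lf u x + t * lf u' x := by
  simp only [lf, Pi.add_apply, Pi.smul_apply, smul_eq_mul, add_mul, Finset.sum_add_distrib,
    Finset.mul_sum]
  congr 1
  exact Finset.sum_congr rfl fun i _ => mul_assoc _ _ _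

lemma lf_combo (v : Fin n → ℝ) (a b : ℝ) (x y : Fin n → ℝ) :
    lf v (a • x + b • y) = a * lf v x + b * lf v y := by
  rw [(lf_isLinear v).map_add, (lf_isLinear v).map_smul, (lf_isLinear v).map_smul]
  simp [smul_eq_mul]

/-- Maximizing a linear functional over the convex hull is the same as over the set. -/
lemma max_hull {X : Set (Fin n → ℝ)} {v x : Fin n → ℝ} (hx : ∀ y ∈ X, lf v y ≤ lf v x) :
    ∀ y ∈ convexHull ℝ X, lf v y ≤ lf v x := by
  have hcv : Convex ℝ {y : Fin n → ℝ | lf v y ≤ lf v x} :=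
    convex_halfSpace_le (lf_isLinear v) _
  exact fun y hy => convexHull_min hx hcv hy

/-- The convex hull of a compact set in `Fin n → ℝ` is compact (via Carathéodory). -/
lemma isCompact_hull {X : Set (Fin n → ℝ)} (hX : IsCompact X) :
    IsCompact (convexHull ℝ X) := by
  rcases X.eq_empty_or_nonempty with h | ⟨x₀, hx₀⟩
  · simp [h]
  classical
  set g : (Fin (n+1) → ℝ) × (Fin (n+1) → Fin n → ℝ) → (Fin n → ℝ) :=
    fun p => ∑ i, p.1 i • p.2 i with hg
  have hgc : Continuous g := by
    apply continuous_finset_sum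
    intro i _
    exact ((continuous_apply i).comp continuous_fst).smul
      ((continuous_apply i).comp continuous_snd)
  have hD : IsCompact ((stdSimplex ℝ (Fin (n+1))) ×ˢ (Set.univ.pi fun _ : Fin (n+1) => X)) :=
    (isCompact_stdSimplex ℝ (Fin (n+1))).prod (isCompact_univ_pi fun _ => hX)
  have key : convexHull ℝ X = g '' ((stdSimplex ℝ (Fin (n+1))) ×ˢ (Set.univ.pi fun _ : Fin (n+1) => X)) := by
    apply Set.Subset.antisymm
    · intro x hx
      obtain ⟨ι, hι, z, w, hzX, hai, hw0, hw1, hsum⟩ :=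
        eq_pos_convex_span_of_mem_convexHull hx
      set m := Fintype.card ι with hm
      have hcard : m ≤ n + 1 := by
        refine hai.card_le_finrank_succ.trans ?_
        have h1 : Module.finrank ℝ (vectorSpan ℝ (Set.range z)) ≤
            Module.finrank ℝ (Fin n → ℝ) := Submodule.finrank_le _
        rw [Module.finrank_fin_fun] at h1
        omega
      set e := Fintype.equivFin ι with he
      set w' : Fin (n+1) → ℝ := fun j => if h : (j : ℕ) < m then w (e.symm ⟨j, h⟩) else 0 with hw'
      set p : Fin (n+1) → Fin n → ℝ :=
        fun j => if h : (j : ℕ) < m then z (e.symm ⟨j, h⟩) else x₀ with hp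
      have hsum_gen : ∀ (M : Type) [AddCommMonoid M], ∀ f : ι → M,
          (∑ j : Fin (n+1), if h : (j : ℕ) < m then f (e.symm ⟨j, h⟩) else 0) = ∑ i, f i := by
        intro M _ f
        have h1 : (∑ j : Fin (n+1), if h : (j : ℕ) < m then f (e.symm ⟨j, h⟩) else 0)
            = ∑ j ∈ Finset.range (n+1), (if h : j < m then f (e.symm ⟨j, h⟩) else 0) :=
          Fin.sum_univ_eq_sum_range (fun j => if h : j < m then f (e.symm ⟨j, h⟩) else 0) (n+1)
        have h2 : (∑ j ∈ Finset.range (n+1), if h : j < m then f (e.symm ⟨j, h⟩) else 0)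
            = ∑ j ∈ Finset.range m, (if h : j < m then f (e.symm ⟨j, h⟩) else 0) := by
          refine (Finset.sum_subset (Finset.range_subset_range.2 hcard) ?_).symm
          intro j _ hj
          rw [Finset.mem_range] at hj
          rw [dif_neg hj]
        have h3 : (∑ j ∈ Finset.range m, if h : j < m then f (e.symm ⟨j, h⟩) else 0)
            = ∑ j : Fin m, f (e.symm j) := by
          rw [← Fin.sum_univ_eq_sum_range]
          refine Finset.sum_congr rfl fun j _ => ?_
          rw [dif_pos j.isLt]
        rw [h1, h2, h3]
        exact Equiv.sum_comp e.symm f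
      refine ⟨(w', p), ⟨⟨fun j => ?_, ?_⟩, fun j _ => ?_⟩, ?_⟩
      · by_cases h : (j : ℕ) < m
        · simp only [hw', dif_pos h]; exact (hw0 _).le
        · simp only [hw', dif_neg h]; exact le_rfl
      · rw [show (∑ j, w' j) = ∑ i, w i from hsum_gen ℝ w]; exact hw1
      · by_cases h : (j : ℕ) < m
        · simp only [hp, dif_pos h]; exact hzX ⟨_, rfl⟩
        · simp only [hp, dif_neg h]; exact hx₀
      · show (∑ j, w' j • p j) = x
        have : ∀ j : Fin (n+1), w' j • p j =
            if h : (j : ℕ) < m then w (e.symm ⟨j, h⟩) • z (e.symm ⟨j, h⟩) else 0 := by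
          intro j
          by_cases h : (j : ℕ) < m
          · simp only [hw', hp, dif_pos h]
          · simp only [hw', hp, dif_neg h, zero_smul]
        rw [Finset.sum_congr rfl fun j _ => this j,
          hsum_gen (Fin n → ℝ) (fun i => w i • z i)]
        exact hsum
    · rintro x ⟨⟨w, p⟩, ⟨⟨hw0, hw1⟩, hpX⟩, rfl⟩
      refine (convex_convexHull ℝ X).sum_mem (fun i _ => hw0 i) hw1 fun i _ => ?_
      exact subset_convexHull ℝ X (hpX i (Set.mem_univ i))
  rw [key]
  exact hD.image hgc

/-! ### The sorted cone -/

lemma zero_mem_sortedCone (π : Equiv.Perm (Fin n)) : (0 : Fin n → ℝ) ∈ sortedCone n π :=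
  fun _ _ _ => le_rfl

lemma add_smul_mem_sortedCone {π : Equiv.Perm (Fin n)} {u u' : Fin n → ℝ} {t : ℝ}
    (hu : u ∈ sortedCone n π) (hu' : u' ∈ sortedCone n π) (ht : 0 ≤ t) :
    u + t • u' ∈ sortedCone n π := by
  intro i j hij
  have h1 := hu i j hij
  have h2 := mul_le_mul_of_nonneg_left (hu' i j hij) ht
  simp only [Pi.add_apply, Pi.smul_apply, smul_eq_mul]
  linarith

/-- The prefix-indicator vector: `1` on `π 0, …, π k`, `0` elsewhere. -/
noncomputable def wvec (π : Equiv.Perm (Fin n)) (k : ℕ) : Fin n → ℝ :=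
  fun i => if (π.symm i : ℕ) ≤ k then 1 else 0

lemma wvec_mem_sortedCone (π : Equiv.Perm (Fin n)) (k : ℕ) : wvec π k ∈ sortedCone n π := by
  intro i j hij
  simp only [wvec, Equiv.symm_apply_apply]
  by_cases hj : (j : ℕ) ≤ k
  · have hi : (i : ℕ) ≤ k := le_trans (by exact_mod_cast hij) hj
    simp [hi, hj]
  · have : ¬ ((j : ℕ) ≤ k) := hj
    simp [this]
    by_cases hi : (i : ℕ) ≤ k <;> simp [hi]

lemma lf_wvec (π : Equiv.Perm (Fin n)) (k : ℕ) (x : Fin n → ℝ) :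
    lf (wvec π k) x = ∑ i : Fin n, (if (i : ℕ) ≤ k then x (π i) else 0) := by
  unfold lf wvec
  rw [← Equiv.sum_comp π (fun i => (if ((π.symm i : Fin n) : ℕ) ≤ k then (1:ℝ) else 0) * x i)]
  refine Finset.sum_congr rfl fun i _ => ?_
  simp only [Equiv.symm_apply_apply]
  by_cases h : (i : ℕ) ≤ k <;> simp [h]

/-! ### Argmax sets -/

/-- The set of maximizers of `lf v` over `C`. -/
def amax (v : Fin n → ℝ) (C : Set (Fin n → ℝ)) : Set (Fin n → ℝ) :=
  {x | x ∈ C ∧ ∀ y ∈ C, lf v y ≤ lf v x}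

lemma amax_subset (v : Fin n → ℝ) (C : Set (Fin n → ℝ)) : amax v C ⊆ C := fun _ hx => hx.1

lemma isCompact_amax {C : Set (Fin n → ℝ)} (hC : IsCompact C) (v : Fin n → ℝ) :
    IsCompact (amax v C) := by
  have heq : amax v C = C ∩ ⋂ y ∈ C, {x | lf v y ≤ lf v x} := by
    ext x; simp [amax, Set.mem_iInter]
  have hcl : IsClosed (amax v C) := by
    rw [heq]
    exact hC.isClosed.inter (isClosed_biInter fun y _ =>
      isClosed_le continuous_const (lf_cont v))
  exact hC.of_isClosed_subset hcl (amax_subset v C)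

lemma isExtreme_amax (v : Fin n → ℝ) (C : Set (Fin n → ℝ)) : IsExtreme ℝ C (amax v C) := by
  constructor
  · exact amax_subset v C
  · intro x1 hx1 x2 hx2 z hz hseg
    obtain ⟨a, b, ha, hb, hab, habz⟩ := hseg
    have h1 : lf v x1 ≤ lf v z := hz.2 x1 hx1
    have h2 : lf v x2 ≤ lf v z := hz.2 x2 hx2
    have hcombo : a * lf v x1 + b * lf v x2 = lf v z := by
      rw [← habz, lf_combo]
    have hsplit : a * lf v z + b * lf v z = lf v z := by rw [← add_mul, hab, one_mul]
    have e1 : lf v x1 = lf v z := by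
      rcases lt_or_eq_of_le h1 with hlt | he
      · have c1 : a * lf v x1 < a * lf v z := mul_lt_mul_of_pos_left hlt ha
        have c2 : b * lf v x2 ≤ b * lf v z := mul_le_mul_of_nonneg_left h2 hb.le
        linarith
      · exact he
    have e2 : lf v x2 = lf v z := by
      rcases lt_or_eq_of_le h2 with hlt | he
      · have c1 : b * lf v x2 < b * lf v z := mul_lt_mul_of_pos_left hlt hb
        have c2 : a * lf v x1 ≤ a * lf v z := mul_le_mul_of_nonneg_left h1 ha.le
        linarith
      · exact he
    exact ⟨hx1, fun y hy => (hz.2 y hy).trans e1.ge⟩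

/-! ### The key invariant `QQ` and its preservation -/

/-- `C` is compact and, for every sorted vector, contains a *sorted* maximizer of it. -/
def QQ (π : Equiv.Perm (Fin n)) (C : Set (Fin n → ℝ)) : Prop :=
  IsCompact C ∧ ∀ u ∈ sortedCone n π, ∃ y, y ∈ amax u C ∧ y ∈ sortedCone n π

lemma QQ.step {π : Equiv.Perm (Fin n)} {C : Set (Fin n → ℝ)} (hQ : QQ π C)
    {u : Fin n → ℝ} (hu : u ∈ sortedCone n π) : QQ π (amax u C) := by
  obtain ⟨hcomp, hQ3⟩ := hQ
  refine ⟨isCompact_amax hcomp u, ?_⟩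
  intro u' hu'
  -- perturbation parameters
  set t : ℕ → ℝ := fun k => 1 / ((k : ℝ) + 1) with ht
  have htpos : ∀ k, 0 < t k := fun k => by positivity
  have ht0 : Filter.Tendsto t Filter.atTop (nhds 0) :=
    tendsto_one_div_add_atTop_nhds_zero_nat
  choose y hy hys using fun k : ℕ =>
    hQ3 (u + t k • u') (add_smul_mem_sortedCone hu hu' (htpos k).le)
  have hyC : ∀ k, y k ∈ C := fun k => (hy k).1
  obtain ⟨y', hy'C, φ, hφ, hlim⟩ := hcomp.tendsto_subseq hyC
  have ht0' : Filter.Tendsto (fun k => t (φ k)) Filter.atTop (nhds 0) :=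
    ht0.comp hφ.tendsto_atTop
  have hcoord : ∀ i : Fin n, Filter.Tendsto (fun k => y (φ k) i) Filter.atTop (nhds (y' i)) :=
    fun i => ((continuous_apply i).tendsto y').comp hlim
  have hlfu : Filter.Tendsto (fun k => lf u (y (φ k))) Filter.atTop (nhds (lf u y')) :=
    ((lf_cont u).tendsto y').comp hlim
  have hlfu' : Filter.Tendsto (fun k => lf u' (y (φ k))) Filter.atTop (nhds (lf u' y')) :=
    ((lf_cont u').tendsto y').comp hlim
  have hy'sorted : y' ∈ sortedCone n π := by
    intro i j hij
    exact le_of_tendsto_of_tendsto' (hcoord (π j)) (hcoord (π i))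
      (fun k => hys (φ k) i j hij)
  have hy'max : ∀ z ∈ C, lf u z ≤ lf u y' := by
    intro z hz
    have hk : ∀ k, lf u z + t (φ k) * lf u' z ≤ lf u (y (φ k)) + t (φ k) * lf u' (y (φ k)) := by
      intro k
      have := (hy (φ k)).2 z hz
      rwa [lf_add_smul, lf_add_smul] at this
    have hL : Filter.Tendsto (fun k => lf u z + t (φ k) * lf u' z) Filter.atTop
        (nhds (lf u z + 0 * lf u' z)) :=
      tendsto_const_nhds.add (ht0'.mul tendsto_const_nhds)
    have hR : Filter.Tendsto (fun k => lf u (y (φ k)) + t (φ k) * lf u' (y (φ k)))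
        Filter.atTop (nhds (lf u y' + 0 * lf u' y')) := hlfu.add (ht0'.mul hlfu')
    have := le_of_tendsto_of_tendsto' hL hR hk
    simpa using this
  have hy'max2 : ∀ z ∈ amax u C, lf u' z ≤ lf u' y' := by
    intro z hz
    have hk : ∀ k, lf u' z ≤ lf u' (y (φ k)) := by
      intro k
      have h1 := (hy (φ k)).2 z hz.1
      rw [lf_add_smul, lf_add_smul] at h1
      have h2 : lf u (y (φ k)) ≤ lf u z := hz.2 _ (hyC (φ k))
      have h3 : t (φ k) * lf u' z ≤ t (φ k) * lf u' (y (φ k)) := by linarith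
      exact le_of_mul_le_mul_left h3 (htpos (φ k))
    exact le_of_tendsto_of_tendsto' tendsto_const_nhds hlfu' hk
  exact ⟨y', ⟨⟨hy'C, hy'max⟩, hy'max2⟩, hy'sorted⟩

/-! ### The chain of exposed faces -/

/-- The chain of iterated argmax faces: first along `v`, then along the prefix indicators. -/
noncomputable def chain (π : Equiv.Perm (Fin n)) (v : Fin n → ℝ) (K : Set (Fin n → ℝ)) :
    ℕ → Set (Fin n → ℝ)
  | 0 => amax v K
  | (k+1) => amax (wvec π k) (chain π v K k)

lemma chain_anti (π : Equiv.Perm (Fin n)) (v : Fin n → ℝ) (K : Set (Fin n → ℝ)) :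
    ∀ m k, k ≤ m → chain π v K m ⊆ chain π v K k := by
  intro m
  induction m with
  | zero => intro k hk; rw [Nat.le_zero.mp hk]
  | succ m ih =>
    intro k hk
    rcases Nat.lt_or_ge k (m+1) with h | h
    · exact (amax_subset _ _).trans (ih k (Nat.lt_succ_iff.mp h))
    · have : k = m + 1 := le_antisymm hk h
      rw [this]

end Stmt7Aux

open Stmt7Aux in
/-- A compact nonempty set is standard comonotone iff its convex hull is. -/
theorem stmt_7 (n : ℕ) (X : Set (Fin n → ℝ)) (hX : IsCompact X) (hne : X.Nonempty) :
    StandardComonotone n X ↔ StandardComonotone n (convexHull ℝ X) := by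
  constructor
  · -- easy direction
    intro hXc π v hv _hmax
    obtain ⟨x0, hx0X, hx0max⟩ := hX.exists_isMaxOn hne (lf_cont v).continuousOn
    obtain ⟨x, hxX, hxmax, hxsort⟩ := hXc π v hv ⟨x0, hx0X, fun y hy => hx0max hy⟩
    refine ⟨x, subset_convexHull ℝ X hxX, fun y hy => ?_, hxsort⟩
    exact max_hull (X := X) (v := v) (x := x) hxmax y hy
  · -- hard direction
    intro hconv π v hv _hmax
    set K := convexHull ℝ X with hK
    have hKcomp : IsCompact K := isCompact_hull hX
    -- base invariant
    have hQK : QQ π K := by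
      refine ⟨hKcomp, fun u hu => ?_⟩
      obtain ⟨x0, hx0X, hx0max⟩ := hX.exists_isMaxOn hne (lf_cont u).continuousOn
      have hx0K : ∀ y ∈ K, lf u y ≤ lf u x0 := max_hull fun y hy => hx0max hy
      obtain ⟨x, hxK, hxmax, hxsort⟩ := hconv π u hu ⟨x0, subset_convexHull ℝ X hx0X, hx0K⟩
      exact ⟨x, ⟨hxK, hxmax⟩, hxsort⟩
    -- the chain of faces all satisfy the invariant
    have hQchain : ∀ k, QQ π (chain π v K k) := by
      intro k
      induction k with
      | zero => exact hQK.step hv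
      | succ k ih => exact ih.step (wvec_mem_sortedCone π k)
    -- the chain consists of extreme subsets of K
    have hExt : ∀ k, IsExtreme ℝ K (chain π v K k) := by
      intro k
      induction k with
      | zero => exact isExtreme_amax v K
      | succ k ih => exact ih.trans (isExtreme_amax (wvec π k) (chain π v K k))
    -- all elements of `chain n` agree on every coordinate
    have huniq : ∀ x ∈ chain π v K n, ∀ y ∈ chain π v K n, x = y := by
      intro x hx y hy
      have hlf : ∀ m, m < n → lf (wvec π m) x = lf (wvec π m) y := by
        intro m hm
        have hx' : x ∈ chain π v K (m+1) := chain_anti π v K n (m+1) hm hx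
        have hy' : y ∈ chain π v K (m+1) := chain_anti π v K n (m+1) hm hy
        exact le_antisymm (hy'.2 x hx'.1) (hx'.2 y hy'.1)
      have hcoord : ∀ m : ℕ, ∀ j : Fin n, (j : ℕ) = m → x (π j) = y (π j) := by
        intro m
        induction m using Nat.strong_induction_on with
        | _ m ih =>
          intro j hj
          have hmn : m < n := hj ▸ j.isLt
          have key := hlf m hmn
          rw [lf_wvec, lf_wvec] at key
          have split : ∀ z : Fin n → ℝ,
              (∑ i : Fin n, if (i : ℕ) ≤ m then z (π i) else 0)
              = (∑ i : Fin n, if (i : ℕ) < m then z (π i) else 0) + z (π j) := by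
            intro z
            have h1 : ∀ i : Fin n, (if (i : ℕ) ≤ m then z (π i) else 0)
                = (if (i : ℕ) < m then z (π i) else 0) + (if i = j then z (π i) else 0) := by
              intro i
              by_cases hij : i = j
              · subst hij
                simp [hj]
              · have hne' : (i : ℕ) ≠ m := by
                  intro h
                  exact hij (Fin.ext (h.trans hj.symm))
                by_cases h : (i : ℕ) ≤ m
                · have : (i : ℕ) < m := lt_of_le_of_ne h hne'
                  simp [h, this, hij]
                · have : ¬ ((i : ℕ) < m) := fun hc => h hc.le
                  simp [h, this, hij]
            rw [Finset.sum_congr rfl fun i _ => h1 i, Finset.sum_add_distrib]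
            congr 1
            simp [Finset.sum_ite_eq' Finset.univ j (fun i => z (π i))]
          rw [split x, split y] at key
          have hsum_eq : (∑ i : Fin n, if (i : ℕ) < m then x (π i) else 0)
              = ∑ i : Fin n, if (i : ℕ) < m then y (π i) else 0 := by
            refine Finset.sum_congr rfl fun i _ => ?_
            by_cases h : (i : ℕ) < m
            · simp only [if_pos h]
              exact ih (i : ℕ) h i rfl
            · simp [h]
          rw [hsum_eq] at key
          linarith
      funext i
      have := hcoord ((π.symm i : Fin n) : ℕ) (π.symm i) rfl
      simpa using this
    -- extract the sorted point of the final face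
    obtain ⟨z, hz, hzsort⟩ := (hQchain n).2 0 (zero_mem_sortedCone π)
    have hzn : z ∈ chain π v K n := hz.1
    have hz0 : z ∈ chain π v K 0 := chain_anti π v K n 0 (Nat.zero_le n) hzn
    -- z is an extreme point of K, hence in X
    have hzX : z ∈ X := by
      refine extremePoints_convexHull_subset ⟨(hExt n).1 hzn, ?_⟩
      intro x1 hx1 x2 hx2 hseg
      have h1 := (hExt n).2 hx1 hx2 hzn hseg
      exact huniq x1 h1 z hzn
    refine ⟨z, hzX, fun y hy => ?_, hzsort⟩
    exact hz0.2 y (subset_convexHull ℝ X hy)
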